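/- Let $A_1,\ldots,A_r$ be positive semidefinite operators and $A_0 := \sum_i A_i$. With $P_e^*$ the optimal multi-hypothesis error and POVM measurement operators $\{X_k\}$ satisfying $\sum_k X_k^* X_k = I$, define $\Gamma(\{X_k\}) := \operatorname{Tr} A_0 - \sum_k \|X_k A_k\|_1$ and $\Gamma^* := \inf \Gamma(\{X_k\})$ over all such families. Then $\Gamma^* = \operatorname{Tr} A_0 - \operatorname{Tr}\big(\sum_{i=1}^r A_i^2\big)^{1/2}$, and the infimum is attained by the square measurement $X_k = A_k (\sum_i A_i^2)^{-1/2}$. -/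

import Mathlib

open Matrix
open scoped ComplexOrder

/-- The square root `Matrix.PosSemidef.sqrt` of the older Mathlib (removed since), spelled out. -/
noncomputable def psdMatSqrtOld {m : ℕ} {A : Matrix (Fin m) (Fin m) ℂ} (hA : A.PosSemidef) :
    Matrix (Fin m) (Fin m) ℂ :=
  (hA.1.eigenvectorUnitary : Matrix (Fin m) (Fin m) ℂ) *
    diagonal ((↑) ∘ Real.sqrt ∘ hA.1.eigenvalues) *
    (star (hA.1.eigenvectorUnitary : Matrix (Fin m) (Fin m) ℂ))

theorem psdMatSqrtOld_isHermitian {m : ℕ} {A : Matrix (Fin m) (Fin m) ℂ} (hA : A.PosSemidef) :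
    (psdMatSqrtOld hA).IsHermitian :=
  isHermitian_mul_mul_conjTranspose _
    (isHermitian_diagonal_of_self_adjoint _ (funext fun _ => Complex.conj_ofReal _))

noncomputable def matAbs {m : ℕ} (A : Matrix (Fin m) (Fin m) ℂ) : Matrix (Fin m) (Fin m) ℂ :=
  psdMatSqrtOld (Matrix.posSemidef_conjTranspose_mul_self A)

noncomputable def traceNorm {m : ℕ} (A : Matrix (Fin m) (Fin m) ℂ) : ℝ :=
  ((matAbs A).trace).re

open Classical in
noncomputable def psdSqrt {m : ℕ} (A : Matrix (Fin m) (Fin m) ℂ) : Matrix (Fin m) (Fin m) ℂ :=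
  if h : A.PosSemidef then psdMatSqrtOld h else 0

noncomputable def fid {m : ℕ} (A B : Matrix (Fin m) (Fin m) ℂ) : ℝ :=
  traceNorm (psdSqrt A * psdSqrt B)

noncomputable def matPosPart {m : ℕ} (A : Matrix (Fin m) (Fin m) ℂ) : Matrix (Fin m) (Fin m) ℂ :=
  (2⁻¹ : ℂ) • (matAbs A + A)

noncomputable def matNegPart {m : ℕ} (A : Matrix (Fin m) (Fin m) ℂ) : Matrix (Fin m) (Fin m) ℂ :=
  (2⁻¹ : ℂ) • (matAbs A - A)

/-- Pseudo-inverse of a Hermitian matrix via its spectral decomposition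
(inverting only the nonzero eigenvalues, using `(0:ℝ)⁻¹ = 0`). -/
noncomputable def herPinv {m : ℕ} {A : Matrix (Fin m) (Fin m) ℂ} (hA : A.IsHermitian) :
    Matrix (Fin m) (Fin m) ℂ :=
  (hA.eigenvectorUnitary : Matrix (Fin m) (Fin m) ℂ) *
    Matrix.diagonal (fun i => (((hA.eigenvalues i)⁻¹ : ℝ) : ℂ)) *
    (star (hA.eigenvectorUnitary : Matrix (Fin m) (Fin m) ℂ))

open Classical in
/-- `S^{-1/2}` taken on the support of the positive semidefinite matrix `S`. -/
noncomputable def invSqrt {m : ℕ} (A : Matrix (Fin m) (Fin m) ℂ) : Matrix (Fin m) (Fin m) ℂ :=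
  if h : A.PosSemidef then herPinv (psdMatSqrtOld_isHermitian h) else 0

section TysonAux

variable {m : ℕ}

private lemma star_mul_self_eigU {T : Matrix (Fin m) (Fin m) ℂ} (hT : T.IsHermitian) :
    star (hT.eigenvectorUnitary : Matrix (Fin m) (Fin m) ℂ) *
      (hT.eigenvectorUnitary : Matrix (Fin m) (Fin m) ℂ) = 1 :=
  Matrix.mem_unitaryGroup_iff'.mp (hT.eigenvectorUnitary).2

/-- Functional calculus on a Hermitian matrix via its spectral decomposition. -/
noncomputable def Lf {T : Matrix (Fin m) (Fin m) ℂ} (hT : T.IsHermitian) (f : ℝ → ℝ) :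
    Matrix (Fin m) (Fin m) ℂ :=
  (hT.eigenvectorUnitary : Matrix (Fin m) (Fin m) ℂ) *
    Matrix.diagonal (fun i => ((f (hT.eigenvalues i) : ℝ) : ℂ)) *
    star (hT.eigenvectorUnitary : Matrix (Fin m) (Fin m) ℂ)

lemma Lf_mul {T : Matrix (Fin m) (Fin m) ℂ} (hT : T.IsHermitian) (f g : ℝ → ℝ) :
    Lf hT f * Lf hT g = Lf hT (fun x => f x * g x) := by
  unfold Lf
  set V := (hT.eigenvectorUnitary : Matrix (Fin m) (Fin m) ℂ) with hV
  have key : ∀ X : Matrix (Fin m) (Fin m) ℂ, star V * (V * X) = X := by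
    intro X; rw [← Matrix.mul_assoc, star_mul_self_eigU hT, one_mul]
  simp only [Matrix.mul_assoc]
  rw [key, ← Matrix.mul_assoc (Matrix.diagonal _), diagonal_mul_diagonal]
  simp [← Complex.ofReal_mul]

lemma Lf_congr {T : Matrix (Fin m) (Fin m) ℂ} (hT : T.IsHermitian) {f g : ℝ → ℝ}
    (h : ∀ x, f x = g x) : Lf hT f = Lf hT g := by
  unfold Lf
  rw [show (fun i => ((f (hT.eigenvalues i) : ℝ) : ℂ))
      = (fun i => ((g (hT.eigenvalues i) : ℝ) : ℂ)) from funext fun i => by rw [h]]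

lemma Lf_id {T : Matrix (Fin m) (Fin m) ℂ} (hT : T.IsHermitian) :
    Lf hT (fun x => x) = T := (hT.spectral_theorem).symm

lemma Lf_eq_self {T : Matrix (Fin m) (Fin m) ℂ} (hT : T.IsHermitian) {f : ℝ → ℝ}
    (h : ∀ x, f x = x) : Lf hT f = T := (Lf_congr hT h).trans (Lf_id hT)

lemma Lf_herPinv {T : Matrix (Fin m) (Fin m) ℂ} (hT : T.IsHermitian) :
    Lf hT (fun x => x⁻¹) = herPinv hT := rfl

lemma Lf_conjTranspose {T : Matrix (Fin m) (Fin m) ℂ} (hT : T.IsHermitian) (f : ℝ → ℝ) :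
    (Lf hT f)ᴴ = Lf hT f := by
  unfold Lf
  simp only [Matrix.star_eq_conjTranspose, conjTranspose_mul, conjTranspose_conjTranspose,
    diagonal_conjTranspose, Matrix.mul_assoc, Pi.star_def, Complex.star_def, Complex.conj_ofReal]

lemma Lf_posSemidef {T : Matrix (Fin m) (Fin m) ℂ} (hT : T.IsHermitian) {f : ℝ → ℝ}
    (hf : ∀ i, 0 ≤ f (hT.eigenvalues i)) : (Lf hT f).PosSemidef := by
  have hd : Matrix.PosSemidef (Matrix.diagonal (fun i => ((f (hT.eigenvalues i) : ℝ) : ℂ))) := by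
    rw [posSemidef_diagonal_iff]
    intro i
    rw [Complex.zero_le_real]
    exact hf i
  have := hd.mul_mul_conjTranspose_same (hT.eigenvectorUnitary : Matrix (Fin m) (Fin m) ℂ)
  rwa [← Matrix.star_eq_conjTranspose] at this

noncomputable def Matrix.PosSemidef.sqrt {A : Matrix (Fin m) (Fin m) ℂ} (hA : A.PosSemidef) :
    Matrix (Fin m) (Fin m) ℂ :=
  psdMatSqrtOld hA

lemma Matrix.PosSemidef.posSemidef_sqrt {A : Matrix (Fin m) (Fin m) ℂ} (hA : A.PosSemidef) :
    hA.sqrt.PosSemidef :=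
  Lf_posSemidef hA.1 (fun i => Real.sqrt_nonneg _)

lemma Matrix.PosSemidef.sqrt_mul_self {A : Matrix (Fin m) (Fin m) ℂ} (hA : A.PosSemidef) :
    hA.sqrt * hA.sqrt = A := by
  show Lf hA.1 Real.sqrt * Lf hA.1 Real.sqrt = A
  rw [Lf_mul]
  conv_rhs => rw [← Lf_id hA.1]
  unfold Lf
  rw [show (fun i => ((Real.sqrt (hA.1.eigenvalues i) * Real.sqrt (hA.1.eigenvalues i) : ℝ) : ℂ))
      = (fun i => ((hA.1.eigenvalues i : ℝ) : ℂ)) from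
    funext fun i => by rw [Real.mul_self_sqrt (hA.eigenvalues_nonneg i)]]

open scoped MatrixOrder in
lemma Matrix.PosSemidef.eq_sqrt_of_sq_eq {A : Matrix (Fin m) (Fin m) ℂ} (hA : A.PosSemidef)
    (B : Matrix (Fin m) (Fin m) ℂ) (hB : A ^ 2 = B) :
    A = Matrix.PosSemidef.sqrt (A := B) (by
      subst hB; rw [pow_two]; nth_rewrite 1 [← hA.1.eq]
      exact Matrix.posSemidef_conjTranspose_mul_self A) := by
  have hB' : B.PosSemidef := by
    subst hB; rw [pow_two]; nth_rewrite 1 [← hA.1.eq]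
    exact Matrix.posSemidef_conjTranspose_mul_self A
  have h1 := hB'.posSemidef_sqrt
  have h2 := hB'.sqrt_mul_self
  exact (CFC.mul_self_eq_mul_self_iff A _ hA.nonneg h1.nonneg).1 (by rw [← pow_two, hB, h2])

lemma trace_re_nonneg {M : Matrix (Fin m) (Fin m) ℂ} (hM : M.PosSemidef) :
    0 ≤ M.trace.re := by
  rw [Matrix.trace, Complex.re_sum]
  apply Finset.sum_nonneg
  intro i _
  have := hM.re_dotProduct_nonneg (Pi.single i 1)
  simpa [Matrix.mulVec, dotProduct, Pi.single_apply] using this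

lemma trace_herm_entries (M N : Matrix (Fin m) (Fin m) ℂ) :
    (Mᴴ * N).trace.re = ∑ p : Fin m × Fin m, ((starRingEnd ℂ) (M p.2 p.1) * N p.2 p.1).re := by
  simp [Matrix.trace, Matrix.diag, Matrix.mul_apply, Matrix.conjTranspose_apply,
    Complex.re_sum, Fintype.sum_prod_type]

/-- Cauchy–Schwarz for the (real part of the) Frobenius inner product, summed over a family. -/
lemma trace_CS {ι : Type} [Fintype ι] (M N : ι → Matrix (Fin m) (Fin m) ℂ) :
    ∑ k, ((M k)ᴴ * N k).trace.re ≤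
      Real.sqrt (∑ k, ((M k)ᴴ * M k).trace.re) * Real.sqrt (∑ k, ((N k)ᴴ * N k).trace.re) := by
  set f : ι × Fin m × Fin m → ℝ := fun q => ‖M q.1 q.2.2 q.2.1‖ with hf
  set g : ι × Fin m × Fin m → ℝ := fun q => ‖N q.1 q.2.2 q.2.1‖ with hg
  have hM2 : ∀ k, ((M k)ᴴ * M k).trace.re = ∑ p : Fin m × Fin m, f (k, p) ^ 2 := by
    intro k
    rw [trace_herm_entries]
    apply Finset.sum_congr rfl
    intro p _
    rw [Complex.conj_mul']
    simp [hf, ← Complex.ofReal_pow, Complex.sq_norm]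
  have hN2 : ∀ k, ((N k)ᴴ * N k).trace.re = ∑ p : Fin m × Fin m, g (k, p) ^ 2 := by
    intro k
    rw [trace_herm_entries]
    apply Finset.sum_congr rfl
    intro p _
    rw [Complex.conj_mul']
    simp [hg, ← Complex.ofReal_pow, Complex.sq_norm]
  have h1 : ∑ k, ((M k)ᴴ * N k).trace.re ≤ ∑ q : ι × Fin m × Fin m, f q * g q := by
    rw [Fintype.sum_prod_type]
    apply Finset.sum_le_sum
    intro k _
    rw [trace_herm_entries]
    apply Finset.sum_le_sum
    intro p _
    calc ((starRingEnd ℂ) (M k p.2 p.1) * N k p.2 p.1).re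
        ≤ ‖(starRingEnd ℂ) (M k p.2 p.1) * N k p.2 p.1‖ := Complex.re_le_norm _
      _ = f (k, p) * g (k, p) := by simp [hf, hg, _root_.map_mul]
  have h2 : ∑ q : ι × Fin m × Fin m, f q * g q ≤
      Real.sqrt (∑ q, f q ^ 2) * Real.sqrt (∑ q, g q ^ 2) := by
    have hcs := Finset.sum_mul_sq_le_sq_mul_sq Finset.univ f g
    have hnn : 0 ≤ ∑ q : ι × Fin m × Fin m, f q * g q :=
      Finset.sum_nonneg fun q _ => mul_nonneg (norm_nonneg _) (norm_nonneg _)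
    calc ∑ q : ι × Fin m × Fin m, f q * g q
        = Real.sqrt ((∑ q : ι × Fin m × Fin m, f q * g q) ^ 2) := (Real.sqrt_sq hnn).symm
      _ ≤ Real.sqrt ((∑ q, f q ^ 2) * ∑ q, g q ^ 2) := Real.sqrt_le_sqrt hcs
      _ = _ := Real.sqrt_mul (Finset.sum_nonneg fun q _ => sq_nonneg _) _
  refine h1.trans (h2.trans (le_of_eq ?_))
  rw [Fintype.sum_prod_type, Fintype.sum_prod_type]
  simp only [hM2, hN2]

/-- If every vector killed by `T` is killed by `M`, then `M * (herPinv hT * T) = M`. -/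
lemma mul_herPinv_mul_self {T M : Matrix (Fin m) (Fin m) ℂ} (hT : T.IsHermitian)
    (h : ∀ x, T *ᵥ x = 0 → M *ᵥ x = 0) : M * (herPinv hT * T) = M := by
  set Q := herPinv hT * T with hQ
  have hTQ : T * (1 - Q) = 0 := by
    have h0 : T * Q = T := by
      calc T * (herPinv hT * T)
          = Lf hT (fun x => x) * (Lf hT (fun x => x⁻¹) * Lf hT (fun x => x)) := by
            rw [Lf_id, Lf_herPinv]
        _ = T := by
            rw [Lf_mul, Lf_mul]
            exact Lf_eq_self hT fun x => by
              rcases eq_or_ne x 0 with h0 | h0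
              · simp [h0]
              · field_simp
    rw [Matrix.mul_sub, Matrix.mul_one, h0, sub_self]
  have hMQ : M * (1 - Q) = 0 := by
    ext i j
    have hcol : T *ᵥ (fun k => (1 - Q) k j) = 0 := by
      funext i'
      have h0 : (T * (1 - Q)) i' j = (0 : Matrix (Fin m) (Fin m) ℂ) i' j := by rw [hTQ]
      simpa [Matrix.mul_apply, Matrix.mulVec, dotProduct] using h0
    have h2 := congrFun (h _ hcol) i
    simpa [Matrix.mul_apply, Matrix.mulVec, dotProduct] using h2
  rw [Matrix.mul_sub, Matrix.mul_one] at hMQ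
  exact (sub_eq_zero.mp hMQ).symm

lemma vec_eq_zero_of_re_dot {w : Fin m → ℂ} (h : (dotProduct (star w) w).re = 0) :
    w = 0 := by
  have h2 : ∑ j, Complex.normSq (w j) = 0 := by
    rw [dotProduct] at h
    rw [Complex.re_sum] at h
    rw [← h]
    apply Finset.sum_congr rfl
    intro j _
    rw [Pi.star_apply, Complex.star_def, Complex.conj_mul']
    simp [← Complex.ofReal_pow, Complex.sq_norm]
  funext j
  have := (Finset.sum_eq_zero_iff_of_nonneg
    (fun j _ => Complex.normSq_nonneg (w j))).mp h2 j (Finset.mem_univ j)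
  simpa [Complex.normSq_eq_zero] using this

/-- Polar-type decomposition: a contraction `W` with `Wᴴ B = |B|`. -/
lemma polar_exists (B : Matrix (Fin m) (Fin m) ℂ) :
    ∃ W : Matrix (Fin m) (Fin m) ℂ, Wᴴ * B = matAbs B ∧ (1 - W * Wᴴ).PosSemidef := by
  have haP : (matAbs B).PosSemidef := (Matrix.posSemidef_conjTranspose_mul_self B).posSemidef_sqrt
  have haH : (matAbs B).IsHermitian := haP.isHermitian
  have haa : matAbs B * matAbs B = Bᴴ * B :=
    (Matrix.posSemidef_conjTranspose_mul_self B).sqrt_mul_self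
  set a := matAbs B with ha
  set p := herPinv haH with hp
  have hpH : pᴴ = p := by rw [hp, ← Lf_herPinv haH]; exact Lf_conjTranspose haH _
  have hker : ∀ x, a *ᵥ x = 0 → B *ᵥ x = 0 := by
    intro x hx
    have h1 : (Bᴴ * B) *ᵥ x = 0 := by
      rw [← haa, ← Matrix.mulVec_mulVec, hx, Matrix.mulVec_zero]
    have h2 : dotProduct (star (B *ᵥ x)) (B *ᵥ x) = 0 := by
      rw [Matrix.star_mulVec, ← dotProduct_mulVec, Matrix.mulVec_mulVec, h1,
        dotProduct_zero]
    exact dotProduct_star_self_eq_zero.mp h2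
  have hBQ : B * (p * a) = B := mul_herPinv_mul_self haH hker
  refine ⟨B * p, ?_, ?_⟩
  · -- (B p)ᴴ B = p Bᴴ B = p a a = a
    have : p * (a * a) = a := by
      calc p * (a * a)
          = Lf haH (fun x => x⁻¹) * (Lf haH (fun x => x) * Lf haH (fun x => x)) := by
            rw [Lf_id, Lf_herPinv]
        _ = a := by
            rw [Lf_mul, Lf_mul]
            exact Lf_eq_self haH fun x => by
              rcases eq_or_ne x 0 with h0 | h0
              · simp [h0]
              · field_simp
    rw [conjTranspose_mul, hpH, Matrix.mul_assoc, ← haa, this]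
  · -- 1 - W Wᴴ psd
    have hC : p * p = Lf haH (fun x => x⁻¹ * x⁻¹) := by
      rw [hp, ← Lf_herPinv haH, Lf_mul]
    have hCpsd : (p * p).PosSemidef := by
      rw [hC]; exact Lf_posSemidef haH fun i => mul_self_nonneg _
    have hWW : (B * p) * (B * p)ᴴ = B * (p * p) * Bᴴ := by
      rw [conjTranspose_mul, hpH]
      simp only [Matrix.mul_assoc]
    rw [hWW]
    have hQpsd : (B * (p * p) * Bᴴ).PosSemidef := hCpsd.mul_mul_conjTranspose_same B
    have hmid : (p * p) * ((a * a) * (p * p)) = p * p := by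
      calc (p * p) * ((a * a) * (p * p))
          = Lf haH (fun x => x⁻¹ * x⁻¹) * ((Lf haH (fun x => x) * Lf haH (fun x => x)) *
              Lf haH (fun x => x⁻¹ * x⁻¹)) := by rw [← hC, Lf_id]
        _ = p * p := by
            rw [Lf_mul, Lf_mul, Lf_mul, hC]
            exact Lf_congr haH fun x => by
              rcases eq_or_ne x 0 with h0 | h0
              · simp [h0]
              · field_simp
    have hidem : (B * (p * p) * Bᴴ) * (B * (p * p) * Bᴴ) = B * (p * p) * Bᴴ := by
      calc (B * (p * p) * Bᴴ) * (B * (p * p) * Bᴴ)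
          = B * ((p * p) * ((a * a) * (p * p))) * Bᴴ := by
            rw [haa]; simp only [Matrix.mul_assoc]
        _ = B * (p * p) * Bᴴ := by rw [hmid]
    have hherm : (1 - B * (p * p) * Bᴴ)ᴴ = 1 - B * (p * p) * Bᴴ := by
      rw [conjTranspose_sub, conjTranspose_one, hQpsd.isHermitian.eq]
    have hsq : (1 - B * (p * p) * Bᴴ)ᴴ * (1 - B * (p * p) * Bᴴ) = 1 - B * (p * p) * Bᴴ := by
      rw [hherm, Matrix.mul_sub, Matrix.mul_one, Matrix.sub_mul, Matrix.one_mul, hidem]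
      abel
    rw [← hsq]
    exact Matrix.posSemidef_conjTranspose_mul_self _

lemma trace_mul_le_of_psd {C D : Matrix (Fin m) (Fin m) ℂ} (hC : C.PosSemidef)
    (hD : (1 - D).PosSemidef) : (C * D).trace.re ≤ C.trace.re := by
  have h2 : 0 ≤ (C * (1 - D)).trace.re := by
    have hs : hC.sqrt * hC.sqrt = C := hC.sqrt_mul_self
    have hE : hC.sqrt.IsHermitian := hC.posSemidef_sqrt.isHermitian
    have hps : (hC.sqrt * (1 - D) * hC.sqrtᴴ).PosSemidef := hD.mul_mul_conjTranspose_same _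
    rw [hE.eq] at hps
    have htr : (C * (1 - D)).trace = (hC.sqrt * (1 - D) * hC.sqrt).trace := by
      conv_lhs => rw [← hs]
      rw [Matrix.mul_assoc, Matrix.mul_assoc, Matrix.trace_mul_comm, Matrix.mul_assoc]
    rw [htr]
    exact trace_re_nonneg hps
  have h3 : (C * (1 - D)).trace.re = C.trace.re - (C * D).trace.re := by
    rw [Matrix.mul_sub, Matrix.mul_one, Matrix.trace_sub, Complex.sub_re]
  linarith

lemma traceNorm_psd {M : Matrix (Fin m) (Fin m) ℂ} (hM : M.PosSemidef) :
    traceNorm M = M.trace.re := by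
  have hsq : M ^ 2 = Mᴴ * M := by
    rw [pow_two]
    exact (congrArg (· * M) hM.isHermitian.eq).symm
  have : M = (Matrix.posSemidef_conjTranspose_mul_self M).sqrt :=
    hM.eq_sqrt_of_sq_eq _ hsq
  unfold Matrix.PosSemidef.sqrt at this
  rw [traceNorm, matAbs, ← this]

lemma re_dot_eq (w : Fin m → ℂ) :
    (dotProduct (star w) w).re = ∑ j, Complex.normSq (w j) := by
  rw [dotProduct, Complex.re_sum]
  apply Finset.sum_congr rfl
  intro j _
  rw [Pi.star_apply, Complex.star_def, Complex.conj_mul']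
  simp [← Complex.ofReal_pow, Complex.sq_norm]

end TysonAux

theorem tyson_gamma_formula {d r : ℕ}
    (A : Fin r → Matrix (Fin d) (Fin d) ℂ) (hA : ∀ i, (A i).PosSemidef) :
    (∀ X : Fin r → Matrix (Fin d) (Fin d) ℂ, (∑ k, (X k)ᴴ * X k) = 1 →
      ((∑ i, A i).trace).re - ((psdSqrt (∑ i, A i * A i)).trace).re ≤
        ((∑ i, A i).trace).re - ∑ k, traceNorm (X k * A k)) ∧
    ((∑ i, A i).trace).re - ∑ k, traceNorm ((A k * invSqrt (∑ i, A i * A i)) * A k) =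
      ((∑ i, A i).trace).re - ((psdSqrt (∑ i, A i * A i)).trace).re := by
  classical
  have hSpsd : (∑ i, A i * A i).PosSemidef := by
    have hsq : ∀ i : Fin r, (A i * A i).PosSemidef := by
      intro i
      have h := Matrix.posSemidef_conjTranspose_mul_self (A i)
      rwa [(hA i).isHermitian.eq] at h
    exact Finset.sum_induction _ _ (fun a b ha hb => ha.add hb) Matrix.PosSemidef.zero
      (fun i _ => hsq i)
  set S := ∑ i, A i * A i with hSdef
  have hT : (hSpsd.sqrt).PosSemidef := hSpsd.posSemidef_sqrt
  set T := hSpsd.sqrt with hTdef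
  have hTH : T.IsHermitian := hT.isHermitian
  have hTT : T * T = S := hSpsd.sqrt_mul_self
  have hpsdSqrt : psdSqrt S = T := by rw [psdSqrt, dif_pos hSpsd]; rfl
  -- kernel of S is contained in kernel of each A k
  have hker : ∀ (k : Fin r) (x : Fin d → ℂ), S *ᵥ x = 0 → A k *ᵥ x = 0 := by
    intro k x hx
    have hterm : ∀ i : Fin r,
        dotProduct (star (A i *ᵥ x)) (A i *ᵥ x)
          = dotProduct (star x) ((A i * A i) *ᵥ x) := by
      intro i
      rw [Matrix.star_mulVec, ← dotProduct_mulVec, Matrix.mulVec_mulVec,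
        (hA i).isHermitian.eq]
    have h0 : ∑ i, (dotProduct (star (A i *ᵥ x)) (A i *ᵥ x)).re = 0 := by
      rw [← Complex.re_sum]
      have hmv : (∑ i, A i * A i) *ᵥ x = ∑ i, (A i * A i) *ᵥ x :=
        map_sum (AddMonoidHom.mk' (fun M : Matrix (Fin d) (Fin d) ℂ => M *ᵥ x)
          (fun M N => Matrix.add_mulVec M N x)) _ _
      have hdp : dotProduct (star x) (∑ i, (A i * A i) *ᵥ x)
          = ∑ i, dotProduct (star x) ((A i * A i) *ᵥ x) :=
        map_sum (AddMonoidHom.mk' (fun v : Fin d → ℂ => dotProduct (star x) v)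
          (fun v w => dotProduct_add (star x) v w)) _ _
      have : ∑ i, dotProduct (star (A i *ᵥ x)) (A i *ᵥ x) = 0 := by
        simp only [hterm]
        rw [← hdp, ← hmv, ← hSdef, hx, dotProduct_zero]
      rw [this, Complex.zero_re]
    have hnn : ∀ i : Fin r, 0 ≤ (dotProduct (star (A i *ᵥ x)) (A i *ᵥ x)).re := by
      intro i
      rw [re_dot_eq]
      exact Finset.sum_nonneg fun j _ => Complex.normSq_nonneg _
    have hzero := (Finset.sum_eq_zero_iff_of_nonneg (fun i _ => hnn i)).mp h0 k
      (Finset.mem_univ k)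
    exact vec_eq_zero_of_re_dot hzero
  -- R = fourth root of S
  have hR : (hT.sqrt).PosSemidef := hT.posSemidef_sqrt
  set R := hT.sqrt with hRdef
  have hRH : R.IsHermitian := hR.isHermitian
  have hRR : R * R = T := hT.sqrt_mul_self
  set p := herPinv hRH with hpdef
  have hpH : pᴴ = p := by rw [hpdef, ← Lf_herPinv hRH]; exact Lf_conjTranspose hRH _
  have hkerR : ∀ (k : Fin r) (x : Fin d → ℂ), R *ᵥ x = 0 → A k *ᵥ x = 0 := by
    intro k x hx
    apply hker k
    have hTx : T *ᵥ x = 0 := by rw [← hRR, ← Matrix.mulVec_mulVec, hx, Matrix.mulVec_zero]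
    rw [← hTT, ← Matrix.mulVec_mulVec, hTx, Matrix.mulVec_zero]
  have hAQ : ∀ k, A k * (p * R) = A k := fun k => mul_herPinv_mul_self hRH (hkerR k)
  have hQA : ∀ k, R * (p * A k) = A k := by
    intro k
    have h1 := congrArg Matrix.conjTranspose (hAQ k)
    rw [conjTranspose_mul, conjTranspose_mul, hpH, hRH.eq, (hA k).isHermitian.eq] at h1
    rw [← Matrix.mul_assoc]
    exact h1
  have hTLf : Lf hRH (fun x => x * x) = T := by rw [← Lf_mul, Lf_id, hRR]
  have hppS : (p * p) * S = T := by
    have hS4 : S = R * R * (R * R) := by rw [hRR, hTT]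
    calc (p * p) * S
        = (Lf hRH (fun x => x⁻¹) * Lf hRH (fun x => x⁻¹)) *
            ((Lf hRH (fun x => x) * Lf hRH (fun x => x)) *
              (Lf hRH (fun x => x) * Lf hRH (fun x => x))) := by
          rw [Lf_id, Lf_herPinv, ← hpdef, ← hS4]
      _ = T := by
          simp only [Lf_mul]
          rw [← hTLf]
          exact Lf_congr hRH fun x => by
            rcases eq_or_ne x 0 with h0 | h0
            · simp [h0]
            · field_simp
  constructor
  · -- optimality bound
    intro X hX
    rw [hpsdSqrt]
    apply sub_le_sub_left
    set W : Fin r → Matrix (Fin d) (Fin d) ℂ := fun k => (polar_exists (X k * A k)).choose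
      with hWdef
    have hW1 : ∀ k, (W k)ᴴ * (X k * A k) = matAbs (X k * A k) :=
      fun k => (polar_exists (X k * A k)).choose_spec.1
    have hW2 : ∀ k, (1 - W k * (W k)ᴴ).PosSemidef :=
      fun k => (polar_exists (X k * A k)).choose_spec.2
    set M : Fin r → Matrix (Fin d) (Fin d) ℂ := fun k => R * (X k)ᴴ * W k with hMdef
    set N : Fin r → Matrix (Fin d) (Fin d) ℂ := fun k => p * A k with hNdef
    have hstep1 : ∀ k, traceNorm (X k * A k) = ((M k)ᴴ * N k).trace.re := by
      intro k
      have hMN : (M k)ᴴ * N k = (W k)ᴴ * (X k * A k) := by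
        show (R * (X k)ᴴ * W k)ᴴ * (p * A k) = _
        rw [conjTranspose_mul, conjTranspose_mul, conjTranspose_conjTranspose, hRH.eq]
        simp only [Matrix.mul_assoc]
        rw [hQA k]
      rw [hMN, hW1 k]
      rfl
    have hMM : ∑ k, ((M k)ᴴ * M k).trace.re ≤ T.trace.re := by
      have hterm : ∀ k, ((M k)ᴴ * M k).trace.re ≤ (T * ((X k)ᴴ * X k)).trace.re := by
        intro k
        have e1 : (M k)ᴴ * M k = (W k)ᴴ * ((X k * T * (X k)ᴴ) * W k) := by
          show (R * (X k)ᴴ * W k)ᴴ * (R * (X k)ᴴ * W k) = _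
          rw [conjTranspose_mul, conjTranspose_mul, conjTranspose_conjTranspose, hRH.eq,
            ← hRR]
          simp only [Matrix.mul_assoc]
        have e2 : ((M k)ᴴ * M k).trace
            = ((X k * T * (X k)ᴴ) * (W k * (W k)ᴴ)).trace := by
          rw [e1, Matrix.trace_mul_comm, Matrix.mul_assoc]
        have e3 : ((X k * T * (X k)ᴴ) * (W k * (W k)ᴴ)).trace.re
            ≤ (X k * T * (X k)ᴴ).trace.re :=
          trace_mul_le_of_psd (hT.mul_mul_conjTranspose_same (X k)) (hW2 k)
        have e4 : (X k * T * (X k)ᴴ).trace = (T * ((X k)ᴴ * X k)).trace := by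
          rw [Matrix.trace_mul_comm, ← Matrix.mul_assoc, Matrix.trace_mul_comm]
        rw [e2, ← e4]
        exact e3
      calc ∑ k, ((M k)ᴴ * M k).trace.re ≤ ∑ k, (T * ((X k)ᴴ * X k)).trace.re :=
            Finset.sum_le_sum fun k _ => hterm k
        _ = T.trace.re := by
            rw [← Complex.re_sum, ← Matrix.trace_sum, ← Finset.mul_sum, hX, Matrix.mul_one]
    have hNN : ∑ k, ((N k)ᴴ * N k).trace.re = T.trace.re := by
      have hterm : ∀ k, ((N k)ᴴ * N k).trace = ((p * p) * (A k * A k)).trace := by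
        intro k
        have e1 : (N k)ᴴ * N k = A k * (p * (p * A k)) := by
          show (p * A k)ᴴ * (p * A k) = _
          rw [conjTranspose_mul, hpH, (hA k).isHermitian.eq]
          simp only [Matrix.mul_assoc]
        rw [e1, Matrix.trace_mul_comm]
        simp only [Matrix.mul_assoc]
      calc ∑ k, ((N k)ᴴ * N k).trace.re = ((p * p) * S).trace.re := by
            simp only [hterm]
            rw [← Complex.re_sum, ← Matrix.trace_sum]
            congr 1
            rw [← Finset.mul_sum, ← hSdef]
        _ = T.trace.re := by rw [hppS]
    calc ∑ k, traceNorm (X k * A k) = ∑ k, ((M k)ᴴ * N k).trace.re :=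
          Finset.sum_congr rfl fun k _ => hstep1 k
      _ ≤ Real.sqrt (∑ k, ((M k)ᴴ * M k).trace.re) *
            Real.sqrt (∑ k, ((N k)ᴴ * N k).trace.re) := trace_CS M N
      _ ≤ Real.sqrt (T.trace.re) * Real.sqrt (T.trace.re) := by
          have h1 : Real.sqrt (∑ k, ((M k)ᴴ * M k).trace.re) ≤ Real.sqrt (T.trace.re) :=
            Real.sqrt_le_sqrt hMM
          have h2 : Real.sqrt (∑ k, ((N k)ᴴ * N k).trace.re) = Real.sqrt (T.trace.re) := by
            rw [hNN]
          rw [h2]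
          exact mul_le_mul_of_nonneg_right h1 (Real.sqrt_nonneg _)
      _ = T.trace.re := Real.mul_self_sqrt (trace_re_nonneg hT)
  · -- the square measurement attains the bound
    rw [hpsdSqrt]
    have hinv : invSqrt S = herPinv hTH := by rw [invSqrt, dif_pos hSpsd]; rfl
    rw [hinv]
    congr 1
    have hq_psd : (herPinv hTH).PosSemidef := by
      rw [← Lf_herPinv hTH]
      exact Lf_posSemidef hTH fun i => inv_nonneg.2 (hT.eigenvalues_nonneg i)
    have hMk : ∀ k, ((A k * herPinv hTH) * A k).PosSemidef := by
      intro k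
      have h1 := hq_psd.mul_mul_conjTranspose_same (A k)
      rwa [(hA k).isHermitian.eq] at h1
    have hqS : herPinv hTH * S = T := by
      have hSLf : Lf hTH (fun x => x * x) = S := by rw [← Lf_mul, Lf_id, hTT]
      calc herPinv hTH * S = Lf hTH (fun x => x⁻¹) * Lf hTH (fun x => x * x) := by
            rw [hSLf, Lf_herPinv]
        _ = Lf hTH (fun x => x⁻¹ * (x * x)) := Lf_mul hTH _ _
        _ = T := Lf_eq_self hTH fun x => by
            rcases eq_or_ne x 0 with h0 | h0
            · simp [h0]
            · field_simp
    calc ∑ k, traceNorm ((A k * herPinv hTH) * A k)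
        = ∑ k, ((A k * herPinv hTH) * A k).trace.re :=
          Finset.sum_congr rfl fun k _ => traceNorm_psd (hMk k)
      _ = (herPinv hTH * S).trace.re := by
          have hterm : ∀ k, ((A k * herPinv hTH) * A k).trace
              = (herPinv hTH * (A k * A k)).trace := by
            intro k
            simp only [Matrix.mul_assoc]
            rw [Matrix.trace_mul_comm]
            simp only [Matrix.mul_assoc]
          simp only [hterm]
          rw [← Complex.re_sum, ← Matrix.trace_sum]
          congr 1
          rw [← Finset.mul_sum, ← hSdef]
      _ = T.trace.re := by rw [hqS]
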